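/- For any step-up test and any true null index i with p_i independent of the remaining p-values and P(p_i ≤ x) ≤ x, one has E[1{p_i ≤ α_{R(p)}}/max(R(p),1)] ≤ E[α_{R(p^{(i)})}/R(p^{(i)})]; in particular, for BH critical values α_j = jα/m this equals at most α/m, with equality when p_i is uniform on [0,1]. -/

import Mathlib

open MeasureTheory ProbabilityTheory Finset
open scoped Classical
noncomputable section

/-- `#{i : p i ≤ t}`, i.e. `m·F̂_m(t)`. -/
def countLE {m : ℕ} (p : Fin m → ℝ) (t : ℝ) : ℕ :=
  (Finset.univ.filter (fun i => p i ≤ t)).card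

/-- The `i`-th order statistic `p_{i:m}` (for `1 ≤ i ≤ m`), characterized by
`p_{i:m} ≤ t ↔ i ≤ #{k : p k ≤ t}`. -/
def orderStat {m : ℕ} (p : Fin m → ℝ) (i : ℕ) : ℝ :=
  sInf {t | i ≤ countLE p t}

/-- Step-up rejection number `R = max {j : p_{j:m} ≤ α_j}` (`max ∅ = 0`). -/
def suR {m : ℕ} (α : ℕ → ℝ) (p : Fin m → ℝ) : ℕ :=
  (((Finset.range (m+1)).filter (fun j => 1 ≤ j ∧ orderStat p j ≤ α j)).max).unbotD 0

/-- Step-down rejection number `R = max {j : p_{i:m} ≤ α_i for all i ≤ j}`. -/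
def sdR {m : ℕ} (α : ℕ → ℝ) (p : Fin m → ℝ) : ℕ :=
  (((Finset.range (m+1)).filter
    (fun j => ∀ i ∈ Finset.Icc 1 j, orderStat p i ≤ α i)).max).unbotD 0

/-- FDR `= E[V / max(R,1)]` for rejection number `R` and rejection rule `rej`. -/
def FDR {Ω : Type*} [MeasurableSpace Ω] (μ : Measure Ω) {m : ℕ}
    (p : Ω → Fin m → ℝ) (I0 : Finset (Fin m))
    (R : (Fin m → ℝ) → ℕ) (rej : (Fin m → ℝ) → Fin m → Prop) : ℝ :=
  ∫ ω, ((I0.filter (fun i => rej (p ω) i)).card : ℝ) / (max (R (p ω)) 1 : ℕ) ∂μ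

/-- FDR of the step-up test with critical values `α`. -/
def suFDR {Ω : Type*} [MeasurableSpace Ω] (μ : Measure Ω) {m : ℕ}
    (α : ℕ → ℝ) (p : Ω → Fin m → ℝ) (I0 : Finset (Fin m)) : ℝ :=
  FDR μ p I0 (suR α) (fun q i => q i ≤ α (suR α q))

/-- FDR of the step-down test with critical values `α`
(rejecting the hypotheses belonging to `p_{i:m}`, `i ≤ R`). -/
def sdFDR {Ω : Type*} [MeasurableSpace Ω] (μ : Measure Ω) {m : ℕ}
    (α : ℕ → ℝ) (p : Ω → Fin m → ℝ) (I0 : Finset (Fin m)) : ℝ :=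
  FDR μ p I0 (sdR α) (fun q i => 1 ≤ sdR α q ∧ q i ≤ orderStat q (sdR α q))

/-- Benjamini–Hochberg critical values `b_j = jα/m`. -/
def bh (m : ℕ) (α : ℝ) (j : ℕ) : ℝ := j * α / m

/-- The uniform distribution on `[0,1]`. -/
def unif01 : Measure ℝ := volume.restrict (Set.Icc 0 1)

section Det
variable {m : ℕ}

lemma countLE_mono (p : Fin m → ℝ) : Monotone (countLE p) := by
  intro s t hst
  apply Finset.card_le_card
  intro k hk
  simp only [Finset.mem_filter] at *
  exact ⟨hk.1, hk.2.trans hst⟩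

lemma countLE_le (p : Fin m → ℝ) (t : ℝ) : countLE p t ≤ m := by
  simpa [countLE] using Finset.card_filter_le (Finset.univ : Finset (Fin m)) (fun i => p i ≤ t)

lemma countLE_anti {p q : Fin m → ℝ} (hpq : ∀ k, p k ≤ q k) (t : ℝ) :
    countLE q t ≤ countLE p t := by
  apply Finset.card_le_card
  intro k hk
  simp only [Finset.mem_filter] at *
  exact ⟨hk.1, (hpq k).trans hk.2⟩

lemma exists_le_of_countLE {p : Fin m → ℝ} {j : ℕ} (hj1 : 1 ≤ j) {t : ℝ}
    (h : j ≤ countLE p t) : ∃ k, p k ≤ t := by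
  have h0 : 0 < countLE p t := by omega
  rw [countLE, Finset.card_pos] at h0
  have : (Finset.univ.filter (fun k => p k ≤ t)).Nonempty := h0
  obtain ⟨k, hk⟩ := this
  exact ⟨k, (Finset.mem_filter.mp hk).2⟩

lemma bddBelow_countLE_set (p : Fin m → ℝ) {j : ℕ} (hj1 : 1 ≤ j) :
    BddBelow {t | j ≤ countLE p t} := by
  rcases isEmpty_or_nonempty (Fin m) with hE | hE
  · refine ⟨0, fun t h => ?_⟩
    obtain ⟨k, _⟩ := exists_le_of_countLE hj1 h
    exact hE.elim k
  · refine ⟨(Finset.univ.image p).min' (by simp [Finset.univ_nonempty]), ?_⟩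
    intro t ht
    obtain ⟨k, hk⟩ := exists_le_of_countLE hj1 ht
    exact le_trans (Finset.min'_le _ _ (Finset.mem_image_of_mem p (Finset.mem_univ k))) hk

lemma countLE_set_nonempty (p : Fin m → ℝ) {j : ℕ} (hjm : j ≤ m) :
    {t : ℝ | j ≤ countLE p t}.Nonempty := by
  rcases isEmpty_or_nonempty (Fin m) with hE | hE
  · have hm0 : m = 0 := by
      have h0 : Fintype.card (Fin m) = 0 := Fintype.card_eq_zero_iff.mpr hE
      rwa [Fintype.card_fin] at h0
    refine ⟨0, ?_⟩
    have : j = 0 := by omega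
    simp [this]
  · refine ⟨(Finset.univ.image p).max' (by simp [Finset.univ_nonempty]), ?_⟩
    have : countLE p ((Finset.univ.image p).max' (by simp [Finset.univ_nonempty])) = m := by
      unfold countLE
      rw [Finset.filter_true_of_mem, Finset.card_univ, Fintype.card_fin]
      intro k _
      exact Finset.le_max' _ _ (Finset.mem_image_of_mem p (Finset.mem_univ k))
    simp only [Set.mem_setOf_eq, this]; exact hjm

lemma orderStat_mem (p : Fin m → ℝ) {j : ℕ} (hj1 : 1 ≤ j) (hjm : j ≤ m) :
    j ≤ countLE p (orderStat p j) := by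
  set S := {t : ℝ | j ≤ countLE p t} with hS
  set c := sInf S with hc
  have hoc : orderStat p j = c := rfl
  rw [hoc]
  by_contra h
  push_neg at h
  set B := Finset.univ.filter (fun k => c < p k) with hB
  rcases Finset.eq_empty_or_nonempty B with hBe | hBne
  · -- all p k ≤ c, so countLE p c = m ≥ j
    have hall : ∀ k, p k ≤ c := by
      intro k
      by_contra hk
      have hmem : k ∈ B := by
        rw [hB, Finset.mem_filter]
        exact ⟨Finset.mem_univ k, lt_of_not_ge hk⟩
      rw [hBe] at hmem
      exact absurd hmem (Finset.notMem_empty k)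
    have : countLE p c = m := by
      unfold countLE
      rw [Finset.filter_true_of_mem (fun k _ => hall k), Finset.card_univ, Fintype.card_fin]
    omega
  · set t₀ := (B.image p).min' (hBne.image p) with ht₀
    have hct₀ : c < t₀ := by
      have := (B.image p).min'_mem (hBne.image p)
      rw [← ht₀] at this
      obtain ⟨k, hk, hpk⟩ := Finset.mem_image.mp this
      rw [← hpk]
      exact (Finset.mem_filter.mp hk).2
    have hnotS : ∀ t, c ≤ t → t < t₀ → t ∉ S := by
      intro t hct htt hmem
      have hsub : Finset.univ.filter (fun k => p k ≤ t) ⊆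
          Finset.univ.filter (fun k => p k ≤ c) := by
        intro k hk
        simp only [Finset.mem_filter] at hk ⊢
        refine ⟨hk.1, ?_⟩
        by_contra hkc
        have hkB : k ∈ B := by
          rw [hB, Finset.mem_filter]
          exact ⟨Finset.mem_univ k, lt_of_not_ge hkc⟩
        have : t₀ ≤ p k := Finset.min'_le _ _ (Finset.mem_image_of_mem p hkB)
        exact absurd (hk.2) (by linarith)
      have : countLE p t ≤ countLE p c := Finset.card_le_card hsub
      have : j ≤ countLE p c := le_trans hmem this
      omega
    have hlb : ∀ t ∈ S, t₀ ≤ t := by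
      intro t ht
      have hct : c ≤ t := csInf_le (bddBelow_countLE_set p hj1) ht
      by_contra htt
      exact hnotS t hct (lt_of_not_ge htt) ht
    have : t₀ ≤ c := le_csInf (countLE_set_nonempty p hjm) hlb
    linarith

lemma orderStat_le_iff (p : Fin m → ℝ) {j : ℕ} (hj1 : 1 ≤ j) (hjm : j ≤ m) (t : ℝ) :
    orderStat p j ≤ t ↔ j ≤ countLE p t := by
  constructor
  · intro h
    exact le_trans (orderStat_mem p hj1 hjm) (countLE_mono p h)
  · intro h
    exact csInf_le (bddBelow_countLE_set p hj1) h

-- suR lemmas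
lemma suR_le (α : ℕ → ℝ) (q : Fin m → ℝ) : suR α q ≤ m := by
  unfold suR
  cases h : (((Finset.range (m+1)).filter (fun j => 1 ≤ j ∧ orderStat q j ≤ α j)).max) with
  | bot => simp
  | coe x =>
    have hx := Finset.mem_of_max h
    simp only [Finset.mem_filter, Finset.mem_range] at hx
    simpa using Nat.lt_succ_iff.mp hx.1

lemma le_suR (α : ℕ → ℝ) (q : Fin m → ℝ) {j : ℕ} (hj1 : 1 ≤ j) (hjm : j ≤ m)
    (h : orderStat q j ≤ α j) : j ≤ suR α q := by
  have hmem : j ∈ (Finset.range (m+1)).filter (fun j => 1 ≤ j ∧ orderStat q j ≤ α j) := by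
    simp only [Finset.mem_filter, Finset.mem_range]
    exact ⟨by omega, hj1, h⟩
  have := Finset.le_max hmem
  unfold suR
  cases hmax : (((Finset.range (m+1)).filter (fun j => 1 ≤ j ∧ orderStat q j ≤ α j)).max) with
  | bot => rw [hmax] at this; exact absurd this (by simp)
  | coe x => rw [hmax] at this; simpa using this

lemma suR_spec (α : ℕ → ℝ) (q : Fin m → ℝ) (h : 1 ≤ suR α q) :
    orderStat q (suR α q) ≤ α (suR α q) := by
  unfold suR at *
  cases hmax : (((Finset.range (m+1)).filter (fun j => 1 ≤ j ∧ orderStat q j ≤ α j)).max) with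
  | bot => rw [hmax] at h; simp at h
  | coe x =>
    have hx := Finset.mem_of_max hmax
    simp only [Finset.mem_filter, Finset.mem_range] at hx
    simpa using hx.2.2

end Det

section Det2
variable {m : ℕ}

lemma suR_anti (hm : 1 ≤ m) (α : ℕ → ℝ) {p q : Fin m → ℝ} (hpq : ∀ k, p k ≤ q k) :
    suR α q ≤ suR α p := by
  rcases Nat.eq_zero_or_pos (suR α q) with h0 | h1
  · omega
  · have hr1 : 1 ≤ suR α q := h1
    have hrm : suR α q ≤ m := suR_le α q
    have h := suR_spec α q hr1
    rw [orderStat_le_iff q hr1 hrm] at h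
    have h2 : suR α q ≤ countLE p (α (suR α q)) := le_trans h (countLE_anti hpq _)
    exact le_suR α p hr1 hrm ((orderStat_le_iff p hr1 hrm _).mpr h2)

lemma update_le (q : Fin m → ℝ) (i : Fin m) (h0 : 0 ≤ q i) :
    ∀ k, Function.update q i 0 k ≤ q k := by
  intro k
  rcases eq_or_ne k i with rfl | hk
  · simpa using h0
  · simp [Function.update_apply, hk]

lemma suR_update_pos (hm : 1 ≤ m) {α : ℕ → ℝ} (hα1 : 0 < α 1)
    (q : Fin m → ℝ) (i : Fin m) : 1 ≤ suR α (Function.update q i 0) := by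
  have hc : 1 ≤ countLE (Function.update q i 0) (α 1) := by
    have : i ∈ Finset.univ.filter (fun k => Function.update q i 0 k ≤ α 1) := by
      simp [Function.update_self, le_of_lt hα1]
    calc 1 = ({i} : Finset (Fin m)).card := by simp
    _ ≤ _ := Finset.card_le_card (by simpa using this)
  exact le_suR α _ le_rfl hm ((orderStat_le_iff _ le_rfl hm _).mpr hc)

lemma suR_update_eq (hm : 1 ≤ m) {α : ℕ → ℝ} (hα1 : 0 < α 1) (hmono : Monotone α)
    (q : Fin m → ℝ) (i : Fin m) (h0 : 0 ≤ q i)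
    (h : q i ≤ α (suR α (Function.update q i 0))) :
    suR α q = suR α (Function.update q i 0) := by
  set q' := Function.update q i 0 with hq'
  refine le_antisymm (suR_anti hm α (update_le q i h0)) ?_
  have hr1 : 1 ≤ suR α q' := suR_update_pos hm hα1 q i
  have hrm : suR α q' ≤ m := suR_le α q'
  have hs := suR_spec α q' hr1
  rw [orderStat_le_iff q' hr1 hrm] at hs
  have hsub : Finset.univ.filter (fun k => q' k ≤ α (suR α q')) ⊆
      Finset.univ.filter (fun k => q k ≤ α (suR α q')) := by
    intro k hk
    simp only [Finset.mem_filter, Finset.mem_univ, true_and] at hk ⊢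
    rcases eq_or_ne k i with rfl | hki
    · exact h
    · rw [hq', Function.update_apply] at hk
      simpa [hki] using hk
  have hc : suR α q' ≤ countLE q (α (suR α q')) :=
    le_trans hs (Finset.card_le_card hsub)
  exact le_suR α q hr1 hrm ((orderStat_le_iff q hr1 hrm _).mpr hc)

/-- Pointwise identity converting the step-up integrand. -/
lemma pointwise_key (hm : 1 ≤ m) {α : ℕ → ℝ} (hα1 : 0 < α 1) (hmono : Monotone α)
    (q : Fin m → ℝ) (i : Fin m) (h0 : 0 ≤ q i) :
    (if q i ≤ α (suR α q) then (1:ℝ) else 0) / (max (suR α q) 1 : ℕ)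
      = (if q i ≤ α (suR α (Function.update q i 0)) then (1:ℝ) else 0)
        / (suR α (Function.update q i 0) : ℕ) := by
  by_cases h : q i ≤ α (suR α (Function.update q i 0))
  · have heq := suR_update_eq hm hα1 hmono q i h0 h
    have hr1 : 1 ≤ suR α (Function.update q i 0) := suR_update_pos hm hα1 q i
    rw [heq]
    have hmax : max (suR α (Function.update q i 0)) 1 = suR α (Function.update q i 0) :=
      max_eq_left hr1
    rw [hmax, if_pos h]
  · have h2 : ¬ q i ≤ α (suR α q) := by
      intro hc
      exact h (hc.trans (hmono (suR_anti hm α (update_le q i h0))))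
    rw [if_neg h, if_neg h2]
    simp

-- measurability
lemma measurable_countLE (t : ℝ) : Measurable (fun q : Fin m → ℝ => countLE q t) := by
  have heq : (fun q : Fin m → ℝ => countLE q t)
      = fun q => ∑ k : Fin m, if q k ≤ t then 1 else 0 := by
    funext q
    exact Finset.card_filter _ _
  rw [heq]
  exact Finset.measurable_sum _ (fun k _ =>
    Measurable.ite (measurableSet_le (measurable_pi_apply k) measurable_const)
      measurable_const measurable_const)

lemma le_suR_iff (α : ℕ → ℝ) (q : Fin m → ℝ) {n : ℕ} (hn : 1 ≤ n) :
    n ≤ suR α q ↔ ∃ j, n ≤ j ∧ j ≤ m ∧ j ≤ countLE q (α j) := by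
  constructor
  · intro h
    have hr1 : 1 ≤ suR α q := le_trans hn h
    have hrm : suR α q ≤ m := suR_le α q
    refine ⟨suR α q, h, hrm, ?_⟩
    exact (orderStat_le_iff q hr1 hrm _).mp (suR_spec α q hr1)
  · rintro ⟨j, hnj, hjm, hc⟩
    have hj1 : 1 ≤ j := le_trans hn hnj
    exact le_trans hnj (le_suR α q hj1 hjm ((orderStat_le_iff q hj1 hjm _).mpr hc))

lemma measurable_suR (α : ℕ → ℝ) : Measurable (fun q : Fin m → ℝ => suR α q) := by
  have hU : ∀ n : ℕ, MeasurableSet {q : Fin m → ℝ | n ≤ suR α q} := by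
    intro n
    rcases Nat.eq_zero_or_pos n with rfl | hn
    · simpa using MeasurableSet.univ
    · have : {q : Fin m → ℝ | n ≤ suR α q}
          = ⋃ j ∈ Finset.Icc n m, {q : Fin m → ℝ | j ≤ countLE q (α j)} := by
        ext q
        simp only [Set.mem_setOf_eq, Set.mem_iUnion, Finset.mem_Icc, exists_prop]
        rw [le_suR_iff α q hn]
        constructor
        · rintro ⟨j, h1, h2, h3⟩; exact ⟨j, ⟨h1, h2⟩, h3⟩
        · rintro ⟨j, ⟨h1, h2⟩, h3⟩; exact ⟨j, h1, h2, h3⟩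
      rw [this]
      exact MeasurableSet.biUnion (Finset.Icc n m).countable_toSet
        (fun j _ => measurableSet_le measurable_const (measurable_countLE (α j)))
  apply measurable_to_countable'
  intro n
  have : (fun q : Fin m → ℝ => suR α q) ⁻¹' {n}
      = {q : Fin m → ℝ | n ≤ suR α q} \ {q : Fin m → ℝ | n + 1 ≤ suR α q} := by
    ext q
    simp only [Set.mem_preimage, Set.mem_singleton_iff, Set.mem_diff, Set.mem_setOf_eq]
    omega
  rw [this]
  exact (hU n).diff (hU (n+1))

end Det2

section Prob
variable {Ω : Type*} [MeasurableSpace Ω] {m : ℕ}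

lemma ite_div_nonneg (c x : ℝ) (n : ℕ) :
    (0:ℝ) ≤ (if x ≤ c then (1:ℝ) else 0) / ((n : ℕ) : ℝ) := by
  apply div_nonneg _ (by positivity)
  split <;> norm_num

lemma norm_ite_div_le (c x : ℝ) (n : ℕ) :
    ‖(if x ≤ c then (1:ℝ) else 0) / ((n : ℕ) : ℝ)‖ ≤ 1 := by
  have h0 : (0:ℝ) ≤ (if x ≤ c then (1:ℝ) else 0) := by split <;> norm_num
  have h1 : (if x ≤ c then (1:ℝ) else 0) ≤ 1 := by split <;> norm_num
  rcases Nat.eq_zero_or_pos n with h | h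
  · simp [h]
  · rw [Real.norm_eq_abs, abs_of_nonneg (div_nonneg h0 (by positivity))]
    rw [div_le_one (by exact_mod_cast h)]
    exact le_trans h1 (by exact_mod_cast h)

lemma measurable_H (α : ℕ → ℝ) :
    Measurable (fun z : (Fin m → ℝ) × ℝ =>
      (if z.2 ≤ α (suR α z.1) then (1:ℝ) else 0) / ((suR α z.1 : ℕ) : ℝ)) := by
  have h1 : Measurable (fun z : (Fin m → ℝ) × ℝ => ((suR α z.1 : ℕ) : ℝ)) :=
    measurable_from_top.comp ((measurable_suR α).comp measurable_fst)
  have h2 : Measurable (fun z : (Fin m → ℝ) × ℝ => α (suR α z.1)) :=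
    measurable_from_top.comp ((measurable_suR α).comp measurable_fst)
  exact (Measurable.ite (measurableSet_le measurable_snd h2) measurable_const
    measurable_const).div h1

/-- The master Fubini identity. -/
lemma master_eq (μ : Measure Ω) [IsProbabilityMeasure μ]
    (hm : 1 ≤ m) (α : ℕ → ℝ) (hα1 : 0 < α 1) (hmono : Monotone α)
    (p : Ω → Fin m → ℝ) (hmeas : ∀ k, Measurable (fun ω => p ω k))
    (hrange : ∀ ω k, p ω k ∈ Set.Icc (0:ℝ) 1) (i : Fin m)
    (hind : IndepFun (fun ω => p ω i) (fun ω (k : {k // k ≠ i}) => p ω k) μ) :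
    ∫ ω, (if p ω i ≤ α (suR α (p ω)) then (1:ℝ) else 0)
        / (max (suR α (p ω)) 1 : ℕ) ∂μ
      = ∫ ω, ((Measure.map (fun ω' => p ω' i) μ)
            (Set.Iic (α (suR α (Function.update (p ω) i 0))))).toReal
          / (suR α (Function.update (p ω) i 0) : ℕ) ∂μ := by
  have hXm : Measurable (fun ω => p ω i) := hmeas i
  have hYm : Measurable (fun ω => Function.update (p ω) i 0) := by
    apply measurable_pi_lambda
    intro k
    have hk : (fun ω => Function.update (p ω) i 0 k)
        = fun ω => if k = i then 0 else p ω k := by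
      funext ω; simp [Function.update_apply]
    rw [hk]
    rcases eq_or_ne k i with rfl | hki
    · simp
    · simpa [hki] using hmeas k
  -- independence of X and Y
  have hφ : Measurable (fun z : ({k : Fin m // k ≠ i} → ℝ) =>
      (fun k => if h : k = i then 0 else z ⟨k, h⟩ : Fin m → ℝ)) := by
    apply measurable_pi_lambda
    intro k
    rcases eq_or_ne k i with rfl | hki
    · simp
    · simpa [hki] using measurable_pi_apply (⟨k, hki⟩ : {k : Fin m // k ≠ i})
  have hindXY : IndepFun (fun ω => p ω i) (fun ω => Function.update (p ω) i 0) μ := by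
    have h := hind.comp measurable_id hφ
    have heq : ((fun z : ({k : Fin m // k ≠ i} → ℝ) =>
        (fun k => if h : k = i then 0 else z ⟨k, h⟩ : Fin m → ℝ))
        ∘ (fun ω (k : {k // k ≠ i}) => p ω k))
        = fun ω => Function.update (p ω) i 0 := by
      funext ω
      funext k
      simp only [Function.comp_apply, Function.update_apply]
      rcases eq_or_ne k i with rfl | hki
      · simp
      · simp [hki]
    rwa [heq] at h
  set ν := Measure.map (fun ω => p ω i) μ with hν
  set κ := Measure.map (fun ω => Function.update (p ω) i 0) μ with hκ
  haveI : IsProbabilityMeasure ν := Measure.isProbabilityMeasure_map hXm.aemeasurable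
  haveI : IsProbabilityMeasure κ := Measure.isProbabilityMeasure_map hYm.aemeasurable
  set H : (Fin m → ℝ) × ℝ → ℝ := fun z =>
    (if z.2 ≤ α (suR α z.1) then (1:ℝ) else 0) / ((suR α z.1 : ℕ) : ℝ) with hH
  have hHmeas : Measurable H := measurable_H α
  have hpair : Measure.map (fun ω => (Function.update (p ω) i 0, p ω i)) μ = κ.prod ν :=
    (indepFun_iff_map_prod_eq_prod_map_map hYm.aemeasurable hXm.aemeasurable).mp hindXY.symm
  have hHint : Integrable H (κ.prod ν) :=
    Integrable.mono' (integrable_const 1) hHmeas.aestronglyMeasurable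
      (Filter.Eventually.of_forall (fun z => norm_ite_div_le _ _ _))
  calc ∫ ω, (if p ω i ≤ α (suR α (p ω)) then (1:ℝ) else 0)
        / (max (suR α (p ω)) 1 : ℕ) ∂μ
      = ∫ ω, H (Function.update (p ω) i 0, p ω i) ∂μ := by
        apply integral_congr_ae
        apply Filter.Eventually.of_forall
        intro ω
        exact pointwise_key hm hα1 hmono (p ω) i (hrange ω i).1
    _ = ∫ z, H z ∂(Measure.map (fun ω => (Function.update (p ω) i 0, p ω i)) μ) :=
        (integral_map (hYm.prodMk hXm).aemeasurable hHmeas.aestronglyMeasurable).symm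
    _ = ∫ z, H z ∂(κ.prod ν) := by rw [hpair]
    _ = ∫ y, ∫ x, H (y, x) ∂ν ∂κ := integral_prod H hHint
    _ = ∫ y, (ν (Set.Iic (α (suR α y)))).toReal / ((suR α y : ℕ) : ℝ) ∂κ := by
        apply integral_congr_ae
        apply Filter.Eventually.of_forall
        intro y
        show ∫ x, H (y, x) ∂ν
          = (ν (Set.Iic (α (suR α y)))).toReal / ((suR α y : ℕ) : ℝ)
        have hfun : (fun x => H (y, x))
            = fun x => (Set.Iic (α (suR α y))).indicator (fun _ => (1:ℝ)) x
                / ((suR α y : ℕ) : ℝ) := by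
          funext x
          simp [hH, Set.indicator_apply, Set.mem_Iic]
        rw [hfun, integral_div, integral_indicator_const (1:ℝ) measurableSet_Iic]
        simp
        rfl
    _ = ∫ ω, (ν (Set.Iic (α (suR α (Function.update (p ω) i 0))))).toReal
          / ((suR α (Function.update (p ω) i 0) : ℕ) : ℝ) ∂μ := by
        rw [hκ]
        refine integral_map hYm.aemeasurable ?_
        have h1 : Measurable (fun y : Fin m → ℝ => (ν (Set.Iic (α (suR α y)))).toReal) :=
          (measurable_from_top (f := fun n : ℕ => (ν (Set.Iic (α n))).toReal)).comp
            (measurable_suR α)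
        have h2 : Measurable (fun y : Fin m → ℝ => ((suR α y : ℕ) : ℝ)) :=
          (measurable_from_top (f := fun n : ℕ => ((n : ℕ) : ℝ))).comp (measurable_suR α)
        exact (h1.div h2).aestronglyMeasurable

end Prob

/-- The single-coordinate (Fubini) lemma: for a step-up test and
a true null `i` whose p-value is independent of the others and stochastically
larger than uniform,
`E[1{p_i ≤ α_{R(p)}}/max(R(p),1)] ≤ E[α_{R(p^{(i)})}/R(p^{(i)})]`;
for BH critical values `α_j = jα/m` the right side is `α/m`, with equality on
the left when `p_i` is uniform on `[0,1]`. -/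
theorem su_single_coordinate_lemma
    {Ω : Type*} [MeasurableSpace Ω] (μ : Measure Ω) [IsProbabilityMeasure μ]
    (m : ℕ) (hm : 1 ≤ m) (α : ℕ → ℝ)
    (hα0 : α 0 = 0) (hα1 : 0 < α 1) (hmono : Monotone α) (hαm : α m < 1)
    (p : Ω → Fin m → ℝ)
    (hmeas : ∀ k, Measurable (fun ω => p ω k))
    (hrange : ∀ ω k, p ω k ∈ Set.Icc (0:ℝ) 1)
    (i : Fin m)
    -- `p_i` is independent of the remaining p-values
    (hind : IndepFun (fun ω => p ω i) (fun ω (k : {k // k ≠ i}) => p ω k) μ)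
    -- and stochastically larger than (or equal to) uniform
    (hstoch : ∀ x ∈ Set.Icc (0:ℝ) 1, μ {ω | p ω i ≤ x} ≤ ENNReal.ofReal x) :
    (∫ ω, (if p ω i ≤ α (suR α (p ω)) then (1:ℝ) else 0)
        / (max (suR α (p ω)) 1 : ℕ) ∂μ)
      ≤ ∫ ω, α (suR α (Function.update (p ω) i 0))
        / (suR α (Function.update (p ω) i 0) : ℕ) ∂μ ∧
    (∀ a : ℝ, a ∈ Set.Ioo (0:ℝ) 1 → α = bh m a →
      ((∫ ω, (if p ω i ≤ α (suR α (p ω)) then (1:ℝ) else 0)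
          / (max (suR α (p ω)) 1 : ℕ) ∂μ) ≤ a / m ∧
       (Measure.map (fun ω => p ω i) μ = unif01 →
        (∫ ω, (if p ω i ≤ α (suR α (p ω)) then (1:ℝ) else 0)
          / (max (suR α (p ω)) 1 : ℕ) ∂μ) = a / m))) := by
  have hXm : Measurable (fun ω => p ω i) := hmeas i
  have hYm : Measurable (fun ω => Function.update (p ω) i 0) := by
    apply measurable_pi_lambda
    intro k
    have hk : (fun ω => Function.update (p ω) i 0 k)
        = fun ω => if k = i then 0 else p ω k := by
      funext ω; simp [Function.update_apply]
    rw [hk]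
    rcases eq_or_ne k i with rfl | hki
    · simp
    · simpa [hki] using hmeas k
  have hmaster := master_eq μ hm α hα1 hmono p hmeas hrange i hind
  set ν := Measure.map (fun ω => p ω i) μ with hν
  haveI : IsProbabilityMeasure ν := Measure.isProbabilityMeasure_map hXm.aemeasurable
  -- pointwise bound on the "Φ" integrand
  have hΦle : ∀ n : ℕ, n ≤ m →
      (ν (Set.Iic (α n))).toReal / ((n : ℕ) : ℝ) ≤ α n / ((n : ℕ) : ℝ) := by
    intro n hn
    rcases Nat.eq_zero_or_pos n with rfl | h1
    · simp
    · have hc0 : 0 ≤ α n := hα0 ▸ hmono (Nat.zero_le n)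
      have hc1 : α n ≤ 1 := le_of_lt (lt_of_le_of_lt (hmono hn) hαm)
      have hmap : ν (Set.Iic (α n)) = μ {ω | p ω i ≤ α n} := by
        rw [hν, Measure.map_apply hXm measurableSet_Iic]
        rfl
      have hle : (ν (Set.Iic (α n))).toReal ≤ α n := by
        rw [hmap]
        exact ENNReal.toReal_le_of_le_ofReal hc0 (hstoch _ ⟨hc0, hc1⟩)
      exact (div_le_div_iff_of_pos_right (by exact_mod_cast h1)).mpr hle
  -- integrability of both integrands
  have hint1 : Integrable (fun ω =>
      (ν (Set.Iic (α (suR α (Function.update (p ω) i 0))))).toReal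
        / ((suR α (Function.update (p ω) i 0) : ℕ) : ℝ)) μ := by
    apply Integrable.mono' (integrable_const (1:ℝ))
    · exact ((measurable_from_top
        (f := fun n : ℕ => (ν (Set.Iic (α n))).toReal / ((n : ℕ) : ℝ))).comp
        ((measurable_suR α).comp hYm)).aestronglyMeasurable
    · apply Filter.Eventually.of_forall
      intro ω
      set n := suR α (Function.update (p ω) i 0) with hn
      have hnn : (0:ℝ) ≤ (ν (Set.Iic (α n))).toReal / (n:ℝ) :=
        div_nonneg ENNReal.toReal_nonneg (by positivity)
      rw [Real.norm_eq_abs, abs_of_nonneg hnn]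
      rcases Nat.eq_zero_or_pos n with h | h
      · simp [h]
      · rw [div_le_one (by exact_mod_cast h)]
        calc (ν (Set.Iic (α n))).toReal
            ≤ (ν Set.univ).toReal :=
              ENNReal.toReal_mono (measure_ne_top ν _) (measure_mono (Set.subset_univ _))
          _ = 1 := by simp
          _ ≤ (n:ℝ) := by exact_mod_cast h
  have hint2 : Integrable (fun ω =>
      α (suR α (Function.update (p ω) i 0))
        / ((suR α (Function.update (p ω) i 0) : ℕ) : ℝ)) μ := by
    apply Integrable.mono' (integrable_const (1:ℝ))
    · exact ((measurable_from_top
        (f := fun n : ℕ => α n / ((n : ℕ) : ℝ))).comp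
        ((measurable_suR α).comp hYm)).aestronglyMeasurable
    · apply Filter.Eventually.of_forall
      intro ω
      set n := suR α (Function.update (p ω) i 0) with hn
      have hc0 : 0 ≤ α n := hα0 ▸ hmono (Nat.zero_le n)
      have hnn : (0:ℝ) ≤ α n / (n:ℝ) := div_nonneg hc0 (by positivity)
      rw [Real.norm_eq_abs, abs_of_nonneg hnn]
      rcases Nat.eq_zero_or_pos n with h | h
      · simp [h]
      · rw [div_le_one (by exact_mod_cast h)]
        have hc1 : α n ≤ 1 := le_of_lt (lt_of_le_of_lt (hmono (suR_le α _)) hαm)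
        calc α n ≤ 1 := hc1
          _ ≤ (n:ℝ) := by exact_mod_cast h
  have hpart1 : (∫ ω, (if p ω i ≤ α (suR α (p ω)) then (1:ℝ) else 0)
        / (max (suR α (p ω)) 1 : ℕ) ∂μ)
      ≤ ∫ ω, α (suR α (Function.update (p ω) i 0))
        / (suR α (Function.update (p ω) i 0) : ℕ) ∂μ := by
    rw [hmaster]
    exact integral_mono hint1 hint2 (fun ω => hΦle _ (suR_le α _))
  refine ⟨hpart1, ?_⟩
  intro a ha haeq
  have hmne : ((m : ℕ) : ℝ) ≠ 0 := Nat.cast_ne_zero.mpr (by omega)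
  have hRHS : (∫ ω, α (suR α (Function.update (p ω) i 0))
      / (suR α (Function.update (p ω) i 0) : ℕ) ∂μ) = a / m := by
    have hptw : ∀ ω, α (suR α (Function.update (p ω) i 0))
        / ((suR α (Function.update (p ω) i 0) : ℕ) : ℝ) = a / m := by
      intro ω
      have h1 : 1 ≤ suR α (Function.update (p ω) i 0) := suR_update_pos hm hα1 (p ω) i
      set n := suR α (Function.update (p ω) i 0) with hn
      have hne : ((n : ℕ) : ℝ) ≠ 0 := Nat.cast_ne_zero.mpr (by omega)
      rw [haeq]
      unfold bh
      field_simp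
    rw [integral_congr_ae (Filter.Eventually.of_forall hptw)]
    simp [measure_univ]
  refine ⟨le_trans hpart1 (le_of_eq hRHS), ?_⟩
  intro hunif
  have hνu : ν = unif01 := by rw [hν]; exact hunif
  have hΦeq : ∀ n : ℕ, 1 ≤ n → n ≤ m →
      (ν (Set.Iic (α n))).toReal / ((n : ℕ) : ℝ) = a / m := by
    intro n h1 h2
    have hc0 : 0 ≤ α n := hα0 ▸ hmono (Nat.zero_le n)
    have hc1 : α n ≤ 1 := le_of_lt (lt_of_le_of_lt (hmono h2) hαm)
    have hval : ν (Set.Iic (α n)) = ENNReal.ofReal (α n) := by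
      rw [hνu]
      unfold unif01
      rw [Measure.restrict_apply measurableSet_Iic]
      have hset : Set.Iic (α n) ∩ Set.Icc 0 1 = Set.Icc 0 (α n) := by
        ext x
        simp only [Set.mem_inter_iff, Set.mem_Iic, Set.mem_Icc]
        constructor
        · rintro ⟨hx, h0x, _⟩; exact ⟨h0x, hx⟩
        · rintro ⟨h0x, hx⟩; exact ⟨hx, h0x, le_trans hx hc1⟩
      rw [hset, Real.volume_Icc]
      simp
    rw [hval, ENNReal.toReal_ofReal hc0, haeq]
    unfold bh
    have hne : ((n : ℕ) : ℝ) ≠ 0 := Nat.cast_ne_zero.mpr (by omega)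
    field_simp
  rw [hmaster]
  have hptw : ∀ ω, (ν (Set.Iic (α (suR α (Function.update (p ω) i 0))))).toReal
      / ((suR α (Function.update (p ω) i 0) : ℕ) : ℝ) = a / m := fun ω =>
    hΦeq _ (suR_update_pos hm hα1 (p ω) i) (suR_le α _)
  rw [integral_congr_ae (Filter.Eventually.of_forall hptw)]
  simp [measure_univ]
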